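/- Let M ≥ 1. For every λ ∈ L_M, the C-function does not vanish at the point (1/M, 0): Φ_λ(1/M, 0) ≠ 0. Equivalently, the system 2·cos(π(λ1+λ2)/M) + cos(π(λ1−λ2)/M) = 0 and sin(π(λ1−λ2)/M) = 0 has no solution with (λ0,λ1,λ2) ∈ L_M. -/

import Mathlib

open Finset

/-- The point set `F_{P,M}`: triples of nonnegative integers summing to `M`. -/
def FPM (M : ℕ) : Finset (ℕ × ℕ × ℕ) :=
  (Finset.range (M+1) ×ˢ Finset.range (M+1) ×ˢ Finset.range (M+1)).filter
    (fun s => s.1 + s.2.1 + s.2.2 = M)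

/-- The point set `F_{Q,M}`: triples of `F_{P,M}` with `s1 + 2 s2 ≡ 0 (mod 3)`. -/
def FQM (M : ℕ) : Finset (ℕ × ℕ × ℕ) :=
  (FPM M).filter (fun s => (s.2.1 + 2 * s.2.2) % 3 = 0)

/-- The honeycomb point set `H_M = F_{P,M} \ F_{Q,M}`. -/
def HM (M : ℕ) : Finset (ℕ × ℕ × ℕ) := FPM M \ FQM M

/-- The interior point set `F̃_{P,M}`: triples of strictly positive integers summing to `M`. -/
def FPMint (M : ℕ) : Finset (ℕ × ℕ × ℕ) :=
  (FPM M).filter (fun s => 0 < s.1 ∧ 0 < s.2.1 ∧ 0 < s.2.2)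

/-- The interior point set `F̃_{Q,M}`. -/
def FQMint (M : ℕ) : Finset (ℕ × ℕ × ℕ) :=
  (FPMint M).filter (fun s => (s.2.1 + 2 * s.2.2) % 3 = 0)

/-- The interior honeycomb point set `H̃_M = F̃_{P,M} \ F̃_{Q,M}`. -/
def HMint (M : ℕ) : Finset (ℕ × ℕ × ℕ) := FPMint M \ FQMint M

/-- The weight set `L_M ⊆ Λ_{Q,M}`. -/
def LM (M : ℕ) : Finset (ℕ × ℕ × ℕ) :=
  (FPM M).filter (fun l => (l.2.1 < l.1 ∧ l.2.2 < l.1) ∨ (l.1 = l.2.1 ∧ l.2.2 < l.1))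

/-- The interior weight set `L̃_M`: elements of `L_M` with all coordinates positive. -/
def LMint (M : ℕ) : Finset (ℕ × ℕ × ℕ) :=
  (LM M).filter (fun l => 0 < l.1 ∧ 0 < l.2.1 ∧ 0 < l.2.2)

/-- A triple `s ∈ F_{P,M}` is identified with the point `(s1/M, s2/M)`. -/
noncomputable def pt (M : ℕ) (s : ℕ × ℕ × ℕ) : ℝ × ℝ :=
  ((s.2.1 : ℝ) / M, (s.2.2 : ℝ) / M)

/-- The Weyl group orbit of the weight `λ` (ordered list, in `ω`-coordinates). -/
def orbit (l : ℕ × ℕ × ℕ) : List (ℤ × ℤ) :=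
  [(2*(l.2.1:ℤ)+l.2.2, (l.2.1:ℤ)+2*l.2.2),
   (-(l.2.1:ℤ)+l.2.2, (l.2.1:ℤ)+2*l.2.2),
   (-(l.2.1:ℤ)-2*l.2.2, (l.2.1:ℤ)-l.2.2),
   (-(l.2.1:ℤ)-2*l.2.2, -2*(l.2.1:ℤ)-l.2.2),
   (-(l.2.1:ℤ)+l.2.2, -2*(l.2.1:ℤ)-l.2.2),
   (2*(l.2.1:ℤ)+l.2.2, (l.2.1:ℤ)-l.2.2)]

/-- The signs `(+,−,+,−,+,−)` attached to the six orbit points for `S`-functions. -/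
def orbitSigns : List ℤ := [1, -1, 1, -1, 1, -1]

/-- The Weyl orbit `C`-function `Φ_λ` of `A₂`. -/
noncomputable def PhiC (l : ℕ × ℕ × ℕ) (x : ℝ × ℝ) : ℂ :=
  ((orbit l).map (fun p =>
    Complex.exp (2 * Real.pi * Complex.I / 3 * ((p.1 : ℂ) * (x.1 : ℂ) + (p.2 : ℂ) * (x.2 : ℂ))))).sum

/-- The Weyl orbit `S`-function `φ_λ` of `A₂`. -/
noncomputable def PhiS (l : ℕ × ℕ × ℕ) (x : ℝ × ℝ) : ℂ :=
  ((orbitSigns.zip (orbit l)).map (fun p => (p.1 : ℂ) *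
    Complex.exp (2 * Real.pi * Complex.I / 3 * ((p.2.1 : ℂ) * (x.1 : ℂ) + (p.2.2 : ℂ) * (x.2 : ℂ))))).sum

/-- The Hartley kernel `cas t = cos t + sin t`. -/
noncomputable def cas (t : ℝ) : ℝ := Real.cos t + Real.sin t

/-- The Hartley `C`-function `ζ¹_λ` of `A₂`. -/
noncomputable def zetaC (l : ℕ × ℕ × ℕ) (x : ℝ × ℝ) : ℝ :=
  ((orbit l).map (fun p => cas (2 * Real.pi / 3 * ((p.1 : ℝ) * x.1 + (p.2 : ℝ) * x.2)))).sum

/-- The Hartley `S`-function `ζ^e_λ` of `A₂`. -/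
noncomputable def zetaS (l : ℕ × ℕ × ℕ) (x : ℝ × ℝ) : ℝ :=
  ((orbitSigns.zip (orbit l)).map (fun p => (p.1 : ℝ) *
    cas (2 * Real.pi / 3 * ((p.2.1 : ℝ) * x.1 + (p.2.2 : ℝ) * x.2)))).sum

/-- The number of zero entries of a triple. -/
def zeroCount (s : ℕ × ℕ × ℕ) : ℕ :=
  (if s.1 = 0 then 1 else 0) + (if s.2.1 = 0 then 1 else 0) + (if s.2.2 = 0 then 1 else 0)

/-- The discrete function `ε`: values `6, 3, 1` for zero, one, two zero entries. -/
def epsF (s : ℕ × ℕ × ℕ) : ℕ :=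
  if zeroCount s = 0 then 6 else if zeroCount s = 1 then 3 else 1

/-- The discrete function `h_M`: values `1, 2, 6` for zero, one, two zero entries. -/
def hMF (l : ℕ × ℕ × ℕ) : ℕ :=
  if zeroCount l = 0 then 1 else if zeroCount l = 1 then 2 else 6

/-- The elements `γ₀ = id`, `γ₁`, `γ₂` of `Γ_M` acting as cyclic permutations of Kac
coordinates: `γ₁[λ0,λ1,λ2] = [λ2,λ0,λ1]`, `γ₂[λ0,λ1,λ2] = [λ1,λ2,λ0]`. -/
def gam (k : Fin 3) (l : ℕ × ℕ × ℕ) : ℕ × ℕ × ℕ :=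
  if k = 0 then l else if k = 1 then (l.2.2, l.1, l.2.1) else (l.2.1, l.2.2, l.1)

/-- The normalization function `μ` of a triple of extension coefficients. -/
noncomputable def muNorm (a b c : ℂ) : ℝ :=
  ‖a‖ ^ 2 + ‖b‖ ^ 2 + ‖c‖ ^ 2
    - (a * starRingEnd ℂ b + a * starRingEnd ℂ c + b * starRingEnd ℂ c).re

/-- The intertwining function `β` of two triples of extension coefficients. -/
noncomputable def betaFun (a b c a' b' c' : ℂ) : ℂ :=
  2 * (a * starRingEnd ℂ a' + b * starRingEnd ℂ b' + c * starRingEnd ℂ c')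
    - a * (starRingEnd ℂ b' + starRingEnd ℂ c')
    - b * (starRingEnd ℂ a' + starRingEnd ℂ c')
    - c * (starRingEnd ℂ a' + starRingEnd ℂ b')

/-- The extended `C`-function `Φ^t_λ` with extension coefficients `μ0, μ1, μ2`. -/
noncomputable def PhiCExt (μ0 μ1 μ2 : ℂ) (l : ℕ × ℕ × ℕ) (x : ℝ × ℝ) : ℂ :=
  μ0 * PhiC l x + μ1 * PhiC (gam 1 l) x + μ2 * PhiC (gam 2 l) x

/-- The extended `S`-function `φ^t_λ` with extension coefficients `μ0, μ1, μ2`. -/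
noncomputable def PhiSExt (μ0 μ1 μ2 : ℂ) (l : ℕ × ℕ × ℕ) (x : ℝ × ℝ) : ℂ :=
  μ0 * PhiS l x + μ1 * PhiS (gam 1 l) x + μ2 * PhiS (gam 2 l) x

/-- The extended Hartley `C`-function `ζ^{1,t}_λ` with extension coefficients `μ0, μ1, μ2`. -/
noncomputable def zetaCExt (μ0 μ1 μ2 : ℂ) (l : ℕ × ℕ × ℕ) (x : ℝ × ℝ) : ℂ :=
  μ0 * (zetaC l x : ℂ) + μ1 * (zetaC (gam 1 l) x : ℂ) + μ2 * (zetaC (gam 2 l) x : ℂ)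

/-- The extended Hartley `S`-function `ζ^{e,t}_λ` with extension coefficients `μ0, μ1, μ2`. -/
noncomputable def zetaSExt (μ0 μ1 μ2 : ℂ) (l : ℕ × ℕ × ℕ) (x : ℝ × ℝ) : ℂ :=
  μ0 * (zetaS l x : ℂ) + μ1 * (zetaS (gam 1 l) x : ℂ) + μ2 * (zetaS (gam 2 l) x : ℂ)

/-- the `C`-function `Φ_λ` does not vanish at `(1/M, 0)` for `λ ∈ L_M`;
equivalently, the corresponding trigonometric system has no solution in `L_M`. -/
theorem lm_arith (M a b c : ℕ) (hM : 1 ≤ M) (hsum : c + a + b = M)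
    (horder : (a < c ∧ b < c) ∨ (c = a ∧ b < c))
    (ha0 : a ≠ 0) (n m : ℤ) (h3 : 3 * (a:ℤ) = n * M) (hd : (a:ℤ) - b = m * M) : False := by
  have haM : a < M := by omega
  have hMpos : (0:ℤ) < M := by exact_mod_cast hM
  have hn1 : 1 ≤ n := by
    by_contra h
    push_neg at h
    have h' : n * (M:ℤ) ≤ 0 := mul_nonpos_of_nonpos_of_nonneg (by omega) (by omega)
    rw [← h3] at h'
    omega
  have hn2 : n ≤ 2 := by
    by_contra h
    push_neg at h
    have h' : 3 * (M:ℤ) ≤ n * M := mul_le_mul_of_nonneg_right (by omega) (by omega)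
    rw [← h3] at h'
    omega
  have hm1 : -1 ≤ m := by
    by_contra h
    push_neg at h
    have h' : m * (M:ℤ) ≤ -2 * M := mul_le_mul_of_nonneg_right (by omega) (by omega)
    rw [← hd] at h'
    omega
  have hm2 : m ≤ 1 := by
    by_contra h
    push_neg at h
    have h' : 2 * (M:ℤ) ≤ m * M := mul_le_mul_of_nonneg_right (by omega) (by omega)
    rw [← hd] at h'
    omega
  interval_cases n <;> interval_cases m <;> omega

theorem PhiC_at_omega1_ne_zero (M : ℕ) (hM : 1 ≤ M)
    (lam : ℕ × ℕ × ℕ) (hl : lam ∈ LM M) :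
    PhiC lam ((1 : ℝ) / M, 0) ≠ 0
    ∧ ¬ (2 * Real.cos (Real.pi * ((lam.2.1 : ℝ) + lam.2.2) / M) +
           Real.cos (Real.pi * ((lam.2.1 : ℝ) - lam.2.2) / M) = 0
         ∧ Real.sin (Real.pi * ((lam.2.1 : ℝ) - lam.2.2) / M) = 0) := by
  obtain ⟨c, a, b⟩ := lam
  simp only [LM, FPM, Finset.mem_filter, Finset.mem_product, Finset.mem_range] at hl
  obtain ⟨⟨-, hsum⟩, horder⟩ := hl
  simp only at hsum horder ⊢
  have hM0 : (M:ℝ) ≠ 0 := by positivity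
  have hMC : (M:ℂ) ≠ 0 := by exact_mod_cast (show (M:ℝ) ≠ 0 from hM0)
  have hπ : (Real.pi:ℝ) ≠ 0 := Real.pi_ne_zero
  have hπC : ((Real.pi:ℝ):ℂ) ≠ 0 := by exact_mod_cast hπ
  constructor
  · -- complex part
    intro hzero
    have key : PhiC (c, a, b) ((1 : ℝ) / M, 0) =
        2 * (Complex.exp (2*Real.pi*Complex.I/3 * ((2*(a:ℂ)+b) / M))
          + Complex.exp (2*Real.pi*Complex.I/3 * ((-(a:ℂ)+b) / M))
          + Complex.exp (2*Real.pi*Complex.I/3 * ((-(a:ℂ)-2*b) / M))) := by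
      simp only [PhiC, orbit, List.map_cons, List.map_nil, List.sum_cons, List.sum_nil]
      push_cast
      ring_nf
    rw [key] at hzero
    set z : ℂ := Complex.exp (2*Real.pi*Complex.I*(a:ℂ)/M) with hz_def
    set w : ℂ := Complex.exp (-(2*Real.pi*Complex.I*(b:ℂ)/M)) with hw_def
    have hE2 : Complex.exp (2*Real.pi*Complex.I/3 * ((-(a:ℂ)+b) / M)) ≠ 0 :=
      Complex.exp_ne_zero _
    have h1 : Complex.exp (2*Real.pi*Complex.I/3 * ((2*(a:ℂ)+b) / M)) =
        Complex.exp (2*Real.pi*Complex.I/3 * ((-(a:ℂ)+b) / M)) * z := by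
      rw [hz_def, ← Complex.exp_add]; congr 1; ring
    have h3 : Complex.exp (2*Real.pi*Complex.I/3 * ((-(a:ℂ)-2*b) / M)) =
        Complex.exp (2*Real.pi*Complex.I/3 * ((-(a:ℂ)+b) / M)) * w := by
      rw [hw_def, ← Complex.exp_add]; congr 1; ring
    rw [h1, h3] at hzero
    have hsum0 : 1 + z + w = 0 := by
      have h2 : Complex.exp (2*Real.pi*Complex.I/3 * ((-(a:ℂ)+b) / M)) * (1 + z + w) = 0 := by
        linear_combination hzero / 2
      rcases mul_eq_zero.mp h2 with h | h
      · exact absurd h hE2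
      · exact h
    -- conjugates
    have hconjz : (starRingEnd ℂ) z = Complex.exp (-(2*Real.pi*Complex.I*(a:ℂ)/M)) := by
      rw [hz_def, ← Complex.exp_conj]; congr 1
      simp only [map_div₀, map_mul, map_neg, map_ofNat, Complex.conj_I,
        Complex.conj_natCast, Complex.conj_ofReal]
      ring
    have hzz : z * (starRingEnd ℂ) z = 1 := by
      rw [hconjz, hz_def, ← Complex.exp_add, add_neg_cancel, Complex.exp_zero]
    have hconjw : (starRingEnd ℂ) w = Complex.exp (2*Real.pi*Complex.I*(b:ℂ)/M) := by
      rw [hw_def, ← Complex.exp_conj]; congr 1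
      simp only [map_div₀, map_mul, map_neg, map_ofNat, Complex.conj_I,
        Complex.conj_natCast, Complex.conj_ofReal]
      ring
    have hww : w * (starRingEnd ℂ) w = 1 := by
      rw [hconjw, hw_def, ← Complex.exp_add, neg_add_cancel, Complex.exp_zero]
    have hw_eq : w = -1 - z := by linear_combination hsum0
    have hconjw_eq : (starRingEnd ℂ) w = -1 - (starRingEnd ℂ) z := by
      rw [hw_eq]; simp [map_sub]
    have htrace : z + (starRingEnd ℂ) z = -1 := by
      have h4 : (-1 - z) * (-1 - (starRingEnd ℂ) z) = 1 := by
        rw [← hw_eq, ← hconjw_eq]; exact hww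
      linear_combination h4 - hzz
    have hq : z^2 + z + 1 = 0 := by
      have h5 : z * (-1 - z) = 1 := by
        have h6 : (starRingEnd ℂ) z = -1 - z := by linear_combination htrace
        rw [← h6]; exact hzz
      linear_combination -h5
    have hz1 : z ≠ 1 := by
      intro h; rw [h] at hq; norm_num at hq
    have hcube : z^3 = 1 := by linear_combination (z - 1) * hq
    have ha0 : a ≠ 0 := by
      intro h
      apply hz1
      rw [hz_def, h]
      norm_num
    -- M ∣ 3a
    have hcube' : Complex.exp (3 * (2*Real.pi*Complex.I*(a:ℂ)/M)) = 1 := by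
      rw [show (3:ℂ) * (2*Real.pi*Complex.I*(a:ℂ)/M) = (2*Real.pi*Complex.I*(a:ℂ)/M) +
        ((2*Real.pi*Complex.I*(a:ℂ)/M) + (2*Real.pi*Complex.I*(a:ℂ)/M)) by ring,
        Complex.exp_add, Complex.exp_add, ← hz_def]
      linear_combination hcube
    obtain ⟨n, hn⟩ := Complex.exp_eq_one_iff.mp hcube'
    have h3a : 3 * (a:ℤ) = n * M := by
      have hC : (3:ℂ) * (a:ℂ) = n * M := by
        have hne : (2 * (Real.pi:ℂ) * Complex.I) ≠ 0 :=
          mul_ne_zero (mul_ne_zero two_ne_zero hπC) Complex.I_ne_zero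
        apply mul_left_cancel₀ hne
        field_simp at hn
        linear_combination (2 * (Real.pi:ℂ) * Complex.I) * hn
      exact_mod_cast hC
    -- M ∣ a - b
    have hwz : Complex.exp (-(2*Real.pi*Complex.I*(b:ℂ)/M)) =
        Complex.exp (-(2*Real.pi*Complex.I*(a:ℂ)/M)) := by
      rw [← hw_def, ← hconjz, hw_eq]
      linear_combination -htrace
    obtain ⟨m, hm⟩ := Complex.exp_eq_exp_iff_exists_int.mp hwz
    have hab : (a:ℤ) - b = m * M := by
      have hC : (a:ℂ) - b = m * M := by
        have hne : (2 * (Real.pi:ℂ) * Complex.I) ≠ 0 :=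
          mul_ne_zero (mul_ne_zero two_ne_zero hπC) Complex.I_ne_zero
        apply mul_left_cancel₀ hne
        apply mul_left_cancel₀ hMC
        field_simp at hm
        linear_combination ((M:ℂ) * 2 * (Real.pi:ℂ) * Complex.I) * hm
      exact_mod_cast hC
    exact lm_arith M a b c hM hsum horder ha0 n m h3a hab
  · -- real part
    rintro ⟨hcos, hsin⟩
    obtain ⟨k, hk⟩ := Real.sin_eq_zero_iff.mp hsin
    rw [eq_div_iff hM0] at hk
    have hab : (a:ℝ) - b = k * M := by
      apply mul_left_cancel₀ hπ
      linear_combination -hk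
    have hbM : b ≤ M := by omega
    have haM : a ≤ M := by omega
    have hbMr : (b:ℝ) ≤ M := Nat.cast_le.mpr hbM
    have haMr : (a:ℝ) ≤ M := Nat.cast_le.mpr haM
    have hMpos : (0:ℝ) < M := by positivity
    have hk1 : -1 ≤ k := by
      by_contra h
      push_neg at h
      have h2 : (k:ℝ) ≤ -2 := by exact_mod_cast (show k ≤ -2 by omega)
      nlinarith [Nat.cast_nonneg (α := ℝ) a]
    have hk2 : k ≤ 1 := by
      by_contra h
      push_neg at h
      have h2 : (2:ℝ) ≤ (k:ℝ) := by exact_mod_cast (show 2 ≤ k by omega)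
      nlinarith [Nat.cast_nonneg (α := ℝ) b]
    interval_cases k
    · have h' : (a:ℝ) - b = -M := by rw [hab]; push_cast; ring
      have hab' : (a:ℤ) - b = -M := by exact_mod_cast h'
      omega
    · -- a = b
      have h' : (a:ℝ) = b := by push_cast at hab; linarith
      have hab' : a = b := by exact_mod_cast h'
      subst hab'
      have h2a : 2 * a ≤ M := by omega
      have h2ar : ((a:ℝ) + a) ≤ M := by
        have : ((2*a:ℕ):ℝ) ≤ ((M:ℕ):ℝ) := Nat.cast_le.mpr h2a
        push_cast at this
        linarith
      have hx0 : Real.pi * ((a:ℝ) + a) / M ∈ Set.Icc 0 Real.pi := by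
        constructor
        · positivity
        · rw [div_le_iff₀ hMpos]
          nlinarith [Real.pi_pos]
      have hx1 : (2*Real.pi/3) ∈ Set.Icc 0 Real.pi := by
        constructor
        · positivity
        · nlinarith [Real.pi_pos]
      have hcosval : Real.cos (Real.pi * ((a:ℝ) + a) / M) = Real.cos (2*Real.pi/3) := by
        have hd0 : Real.pi * ((a:ℝ) - a) / M = 0 := by ring_nf
        rw [hd0, Real.cos_zero] at hcos
        rw [show (2*Real.pi/3) = Real.pi - Real.pi/3 by ring, Real.cos_pi_sub,
          Real.cos_pi_div_three]
        linarith
      have heq := Real.injOn_cos hx0 hx1 hcosval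
      rw [div_eq_iff hM0] at heq
      have h3a : 3 * a = M := by
        have h3ar : (3:ℝ) * a = M := by
          apply mul_left_cancel₀ hπ
          linear_combination (3/2) * heq
        exact_mod_cast h3ar
      omega
    · have h' : (a:ℝ) - b = M := by rw [hab]; push_cast; ring
      have hab' : (a:ℤ) - b = M := by exact_mod_cast h'
      omega
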